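/- Let G be a symmetric V×V matrix over F2 and X ⊆ V. Then X is a basis of the column space of G (i.e., a maximal linearly independent set of columns) if and only if X is a maximal element of {Y ⊆ V : det G[Y] = 1} under inclusion. -/

import Mathlib

open Matrix

def psub {V : Type*} [DecidableEq V] {K : Type*} [Field K]
    (A : Matrix V V K) (X : Finset V) :
    Matrix {v // v ∈ X} {v // v ∈ X} K :=
  A.submatrix Subtype.val Subtype.val

section Aux
variable {V : Type*} [Fintype V] [DecidableEq V] {K : Type*} [Field K]

/-- Equiv of a disjoint union of finsets with the sum of subtypes. -/
def unionEquiv (X Z : Finset V) (h : Disjoint X Z) :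
    {u // u ∈ X ∪ Z} ≃ {u // u ∈ X} ⊕ {u // u ∈ Z} where
  toFun u := if hx : u.1 ∈ X then Sum.inl ⟨u.1, hx⟩ else
    Sum.inr ⟨u.1, (Finset.mem_union.mp u.2).resolve_left hx⟩
  invFun s := Sum.elim (fun x => ⟨x.1, Finset.mem_union_left _ x.2⟩)
    (fun z => ⟨z.1, Finset.mem_union_right _ z.2⟩) s
  left_inv u := by by_cases hx : u.1 ∈ X <;> simp [hx]
  right_inv s := by
    rcases s with x | z
    · simp [x.2]
    · have : z.1 ∉ X := fun hx => (Finset.disjoint_left.mp h hx) z.2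
      simp [this]

/-- The Schur complement entry. -/
noncomputable def Sch (G : Matrix V V K) (X : Finset V) (v w : V) : K :=
  G v w - ∑ x : {a // a ∈ X}, ∑ y : {a // a ∈ X}, G v x.1 * (psub G X)⁻¹ x y * G y.1 w

lemma det_psub_union (G : Matrix V V K) (X Z : Finset V) (hd : Disjoint X Z)
    (hA : IsUnit (psub G X).det) :
    (psub G (X ∪ Z)).det =
      (psub G X).det * Matrix.det (Matrix.of fun z z' : {a // a ∈ Z} => Sch G X z.1 z'.1) := by
  classical
  set A := psub G X with hAdef
  haveI : Invertible A := A.invertibleOfIsUnitDet hA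
  set B : Matrix {a // a ∈ X} {a // a ∈ Z} K := Matrix.of fun x z => G x.1 z.1 with hB
  set C : Matrix {a // a ∈ Z} {a // a ∈ X} K := Matrix.of fun z x => G z.1 x.1 with hC
  set D : Matrix {a // a ∈ Z} {a // a ∈ Z} K := Matrix.of fun z z' => G z.1 z'.1 with hD
  have hblk : psub G (X ∪ Z) =
      (Matrix.fromBlocks A B C D).submatrix (unionEquiv X Z hd) (unionEquiv X Z hd) := by
    ext u u'
    dsimp [psub, unionEquiv, Matrix.submatrix]
    by_cases h1 : u.1 ∈ X <;> by_cases h2 : u'.1 ∈ X <;>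
      simp [h1, h2, Matrix.fromBlocks, hAdef, psub, hB, hC, hD]
  rw [hblk, Matrix.det_submatrix_equiv_self, Matrix.det_fromBlocks₁₁]
  congr 1
  congr 1
  · rw [invOf_eq_nonsing_inv]
    ext z z'
    simp only [Matrix.sub_apply, Matrix.of_apply, Sch, hD, hB, hC, Matrix.mul_apply,
      Finset.sum_mul]
    congr 1
    exact (Finset.sum_comm (f := fun (a b : {v // v ∈ X}) => G z.1 a.1 * (psub G X)⁻¹ a b * G b.1 z'.1)).symm

variable {V : Type*} [Fintype V] [DecidableEq V] {K : Type*} [Field K]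

def pairEquiv (v w : V) (hvw : v ≠ w) : Fin 2 ≃ {a // a ∈ ({v, w} : Finset V)} where
  toFun i := if i = 0 then ⟨v, by simp⟩ else ⟨w, by simp⟩
  invFun a := if a.1 = v then 0 else 1
  left_inv i := by
    fin_cases i
    · simp
    · simp [hvw.symm]
  right_inv a := by
    rcases Finset.mem_insert.mp a.2 with h | h
    · simp only [h, if_pos]
      exact Subtype.ext h.symm
    · have h' := Finset.mem_singleton.mp h
      have hv : a.1 ≠ v := fun hv => hvw (hv.symm.trans h')
      simp only [hv, if_neg, if_false]
      norm_num
      exact Subtype.ext h'.symm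

lemma det_pair {v w : V} (hvw : v ≠ w)
    (M : Matrix {a // a ∈ ({v, w} : Finset V)} {a // a ∈ ({v, w} : Finset V)} K) :
    M.det = M ⟨v, by simp⟩ ⟨v, by simp⟩ * M ⟨w, by simp⟩ ⟨w, by simp⟩
      - M ⟨v, by simp⟩ ⟨w, by simp⟩ * M ⟨w, by simp⟩ ⟨v, by simp⟩ := by
  rw [← Matrix.det_submatrix_equiv_self (pairEquiv v w hvw) M, Matrix.det_fin_two]
  norm_num [pairEquiv, Matrix.submatrix_apply]

lemma psub_symm {G : Matrix V V K} (hG : Gᵀ = G) (X : Finset V) :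
    (psub G X)ᵀ = psub G X := by
  ext x y
  have h := congrFun (congrFun hG x.1) y.1
  rw [Matrix.transpose_apply] at h
  exact h

lemma psub_inv_symm {G : Matrix V V K} (hG : Gᵀ = G) (X : Finset V) (x y : {a // a ∈ X}) :
    (psub G X)⁻¹ x y = (psub G X)⁻¹ y x := by
  have h : ((psub G X)⁻¹)ᵀ = (psub G X)⁻¹ := by
    rw [Matrix.transpose_nonsing_inv, psub_symm hG]
  have h2 := congrFun (congrFun h x) y
  rw [Matrix.transpose_apply] at h2
  exact h2.symm

lemma Sch_symm {G : Matrix V V K} (hG : Gᵀ = G) (X : Finset V) (v w : V) :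
    Sch G X v w = Sch G X w v := by
  have hGs : ∀ a b, G a b = G b a := fun a b => by
    have h := congrFun (congrFun hG b) a
    rw [Matrix.transpose_apply] at h
    exact h
  unfold Sch
  rw [hGs v w, Finset.sum_comm]
  congr 1
  refine Finset.sum_congr rfl fun y _ => Finset.sum_congr rfl fun x _ => ?_
  rw [psub_inv_symm hG X x y, hGs v x, hGs y w]
  ring

lemma Sch_diag_eq_zero {G : Matrix V V K} {X : Finset V} {v : V} (hv : v ∉ X)
    (hA : IsUnit (psub G X).det) (h0 : (psub G (insert v X)).det = 0) :
    Sch G X v v = 0 := by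
  have hd : Disjoint X {v} := Finset.disjoint_singleton_right.mpr hv
  have hu : X ∪ {v} = insert v X := by rw [Finset.union_comm, ← Finset.insert_eq]
  have h := det_psub_union G X {v} hd hA
  rw [hu, h0] at h
  letI : Unique {a // a ∈ ({v} : Finset V)} :=
    ⟨⟨⟨v, Finset.mem_singleton_self v⟩⟩, fun a => Subtype.ext (Finset.mem_singleton.mp a.2)⟩
  have h2 : (Matrix.of fun z z' : {a // a ∈ ({v} : Finset V)} => Sch G X z.1 z'.1).det
      = Sch G X v v := by
    rw [Matrix.det_unique]
    rfl
  rw [h2] at h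
  exact (mul_eq_zero.mp h.symm).resolve_left hA.ne_zero

lemma Sch_off_eq_zero {G : Matrix V V K} (hG : Gᵀ = G) {X : Finset V} {v w : V} (hv : v ∉ X)
    (hw : w ∉ X) (hvw : v ≠ w) (hA : IsUnit (psub G X).det)
    (h0 : (psub G (X ∪ {v, w})).det = 0)
    (hdv : Sch G X v v = 0) (hdw : Sch G X w w = 0) :
    Sch G X v w = 0 := by
  have hd : Disjoint X {v, w} := by
    rw [Finset.disjoint_right]
    intro a ha
    rcases Finset.mem_insert.mp ha with rfl | h
    · exact hv
    · exact (Finset.mem_singleton.mp h) ▸ hw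
  have h := det_psub_union G X {v, w} hd hA
  rw [h0, det_pair hvw] at h
  simp only [Matrix.of_apply] at h
  rw [hdv, hdw, zero_mul, zero_sub, Sch_symm hG X w v] at h
  have h3 := (mul_eq_zero.mp h.symm).resolve_left hA.ne_zero
  exact mul_self_eq_zero.mp (neg_eq_zero.mp h3)

lemma rows_li_of_det {G : Matrix V V K} {X : Finset V} (hA : IsUnit (psub G X).det) :
    LinearIndependent K (fun x : {a // a ∈ X} => G x.1) := by
  have h2 : LinearIndependent K (fun i : {a // a ∈ X} => psub G X i) :=
    Matrix.linearIndependent_rows_iff_isUnit.mpr ((Matrix.isUnit_iff_isUnit_det _).mpr hA)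
  have h3 : (fun x : {a // a ∈ X} =>
      (LinearMap.funLeft K K (Subtype.val : {a // a ∈ X} → V)) (G x.1)) =
      (fun i : {a // a ∈ X} => psub G X i) := rfl
  exact LinearIndependent.of_comp (LinearMap.funLeft K K Subtype.val) (h3 ▸ h2)

lemma card_le_rank {G : Matrix V V K} {X : Finset V}
    (hli : LinearIndependent K (fun x : {a // a ∈ X} => G x.1)) :
    X.card ≤ G.rank := by
  have h1 : Module.finrank K (Submodule.span K
      (Set.range (fun x : {a // a ∈ X} => G x.1))) = X.card := by
    rw [finrank_span_eq_card hli, Fintype.card_coe]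
  rw [G.rank_eq_finrank_span_row, ← h1]
  apply Submodule.finrank_mono
  exact Submodule.span_mono (Set.range_subset_iff.mpr fun x => Set.mem_range_self x.1)

lemma rank_le_of_max {G : Matrix V V K} (hG : Gᵀ = G) {X : Finset V}
    (hA : IsUnit (psub G X).det)
    (hmax : ∀ Y : Finset V, X ⊂ Y → (psub G Y).det = 0) :
    G.rank ≤ X.card := by
  classical
  -- all Schur entries outside X vanish
  have hS : ∀ v ∉ X, ∀ w ∉ X, Sch G X v w = 0 := by
    intro v hv w hw
    by_cases hvw : v = w
    · subst hvw
      exact Sch_diag_eq_zero hv hA (hmax _ (Finset.ssubset_insert hv))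
    · have hdv : Sch G X v v = 0 :=
        Sch_diag_eq_zero hv hA (hmax _ (Finset.ssubset_insert hv))
      have hdw : Sch G X w w = 0 :=
        Sch_diag_eq_zero hw hA (hmax _ (Finset.ssubset_insert hw))
      have hsub : X ⊂ X ∪ {v, w} := by
        refine Finset.ssubset_iff_subset_ne.mpr ⟨Finset.subset_union_left, ?_⟩
        intro h
        exact hv (h ▸ Finset.mem_union_right _ (by simp) : v ∈ X)
      exact Sch_off_eq_zero hG hv hw hvw hA (hmax _ hsub) hdv hdw
  -- every row is in the span of the rows indexed by X
  set fam := fun x : {a // a ∈ X} => G x.1 with hfam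
  have hrow : ∀ v : V, G v ∈ Submodule.span K (Set.range fam) := by
    intro v
    by_cases hv : v ∈ X
    · exact Submodule.subset_span ⟨⟨v, hv⟩, rfl⟩
    · have hexp : G v = ∑ x : {a // a ∈ X},
          (∑ y : {a // a ∈ X}, G v y.1 * (psub G X)⁻¹ y x) • fam x := by
        funext w
        rw [Finset.sum_apply]
        simp only [Pi.smul_apply, smul_eq_mul, hfam, Finset.sum_mul]
        by_cases hw : w ∈ X
        · have hinv : (psub G X)⁻¹ * (psub G X) = 1 := Matrix.nonsing_inv_mul _ hA
          have hent : ∀ y : {a // a ∈ X}, (∑ x : {a // a ∈ X}, (psub G X)⁻¹ y x * G x.1 w)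
              = if y = ⟨w, hw⟩ then (1:K) else 0 := by
            intro y
            have h3 := congrFun (congrFun hinv y) ⟨w, hw⟩
            rw [Matrix.mul_apply, Matrix.one_apply] at h3
            exact h3
          symm
          calc ∑ x : {a // a ∈ X}, ∑ y : {a // a ∈ X},
                  G v y.1 * (psub G X)⁻¹ y x * G x.1 w
              = ∑ y : {a // a ∈ X}, ∑ x : {a // a ∈ X},
                  G v y.1 * (psub G X)⁻¹ y x * G x.1 w := Finset.sum_comm
            _ = ∑ y : {a // a ∈ X}, G v y.1 * ∑ x : {a // a ∈ X},
                  (psub G X)⁻¹ y x * G x.1 w := by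
                refine Finset.sum_congr rfl fun y _ => ?_
                rw [Finset.mul_sum]
                exact Finset.sum_congr rfl fun x _ => by ring
            _ = ∑ y : {a // a ∈ X}, G v y.1 * (if y = ⟨w, hw⟩ then (1:K) else 0) := by
                exact Finset.sum_congr rfl fun y _ => by rw [hent y]
            _ = G v w := by simp
        · have h0 := hS v hv w hw
          unfold Sch at h0
          have h1 : G v w = ∑ x : {a // a ∈ X}, ∑ y : {a // a ∈ X},
              G v x.1 * (psub G X)⁻¹ x y * G y.1 w := by
            have := sub_eq_zero.mp h0
            linear_combination this
          rw [h1, Finset.sum_comm]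
      rw [hexp]
      exact Submodule.sum_mem _ fun x _ =>
        Submodule.smul_mem _ _ (Submodule.subset_span ⟨x, rfl⟩)
  rw [G.rank_eq_finrank_span_row]
  have hle : Submodule.span K (Set.range G) ≤ Submodule.span K (Set.range fam) :=
    Submodule.span_le.mpr (Set.range_subset_iff.mpr hrow)
  calc Module.finrank K (Submodule.span K (Set.range G))
      ≤ Module.finrank K (Submodule.span K (Set.range fam)) := Submodule.finrank_mono hle
    _ ≤ Fintype.card {a // a ∈ X} := finrank_range_le_card fam
    _ = X.card := Fintype.card_coe X

lemma det_unit_of_basis {G : Matrix V V K} (hG : Gᵀ = G) {X : Finset V}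
    (hli : LinearIndependent K (fun x : {a // a ∈ X} => G x.1))
    (hcard : X.card = G.rank) : IsUnit (psub G X).det := by
  classical
  set fam := fun x : {a // a ∈ X} => G x.1 with hfam
  -- the rows indexed by X span the full row space
  have hspan : Submodule.span K (Set.range fam) = Submodule.span K (Set.range G) := by
    apply Submodule.eq_of_le_of_finrank_le
    · exact Submodule.span_mono (Set.range_subset_iff.mpr fun x => Set.mem_range_self x.1)
    · change Module.finrank K (Submodule.span K (Set.range G.row)) ≤ _
      rw [← G.rank_eq_finrank_span_row, ← hcard, finrank_span_eq_card hli, Fintype.card_coe]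
  set M := G.submatrix (Subtype.val : {a // a ∈ X} → V) id with hM
  have hMrank : M.rank = X.card := by
    rw [M.rank_eq_finrank_span_row]
    have : Set.range M.row = Set.range fam := rfl
    rw [this, finrank_span_eq_card hli, Fintype.card_coe]
  -- column span of M is contained in column span of psub G X
  have hpsym : (psub G X)ᵀ = psub G X := psub_symm hG X
  have hkey : M.rank ≤ (psub G X).rank := by
    rw [M.rank_eq_finrank_span_cols, (psub G X).rank_eq_finrank_span_cols]
    change Module.finrank K (Submodule.span K (Set.range Mᵀ)) ≤
      Module.finrank K (Submodule.span K (Set.range (psub G X)ᵀ))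
    rw [hpsym]
    apply Submodule.finrank_mono
    apply Submodule.span_le.mpr
    rintro _ ⟨v, rfl⟩
    set φ : (V → K) →ₗ[K] ({a // a ∈ X} → K) := LinearMap.funLeft K K Subtype.val with hφ
    have h1 : Mᵀ v = φ (G v) := by
      funext x
      have := congrFun (congrFun hG x.1) v
      rw [Matrix.transpose_apply] at this
      exact this.symm
    have h2 : G v ∈ Submodule.span K (Set.range fam) :=
      hspan.symm ▸ Submodule.subset_span (Set.mem_range_self v)
    have h3 : φ (G v) ∈ Submodule.map φ (Submodule.span K (Set.range fam)) :=
      Submodule.mem_map_of_mem h2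
    rw [Submodule.map_span, ← Set.range_comp] at h3
    have h4 : (φ ∘ fam) = fun x : {a // a ∈ X} => psub G X x := rfl
    rw [h4] at h3
    rw [h1]
    exact h3
  have hrank : (psub G X).rank = Fintype.card {a // a ∈ X} := by
    refine le_antisymm ((psub G X).rank_le_card_width) ?_
    rw [← Fintype.card_coe X] at hMrank
    exact hMrank ▸ hkey
  have hcols : LinearIndependent K (fun i : {a // a ∈ X} => (psub G X)ᵀ i) := by
    rw [linearIndependent_iff_card_eq_finrank_span]
    rw [Set.finrank, ← Matrix.col_def, ← Matrix.rank_eq_finrank_span_cols, hrank]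
  exact (Matrix.isUnit_iff_isUnit_det _).mp (Matrix.linearIndependent_cols_iff_isUnit.mp hcols)

end Aux

theorem stmt13 {V : Type*} [Fintype V] [DecidableEq V] (G : Matrix V V (ZMod 2))
    (hG : G.IsSymm) (X : Finset V) :
    (LinearIndependent (ZMod 2) (fun x : {v // v ∈ X} => Gᵀ x.1) ∧ X.card = G.rank) ↔
      ((psub G X).det = 1 ∧ ∀ Y : Finset V, X ⊂ Y → (psub G Y).det ≠ 1) := by
  have hG' : Gᵀ = G := hG
  rw [hG']
  have h01 : ∀ a : ZMod 2, a ≠ 0 → a = 1 := by decide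
  have h10 : ∀ a : ZMod 2, a ≠ 1 → a = 0 := by decide
  constructor
  · rintro ⟨hli, hcard⟩
    have hA := det_unit_of_basis hG' hli hcard
    refine ⟨h01 _ hA.ne_zero, ?_⟩
    intro Y hXY hdet
    have hAY : IsUnit (psub G Y).det := hdet ▸ isUnit_one
    have h2 := card_le_rank (rows_li_of_det hAY)
    have h3 := Finset.card_lt_card hXY
    omega
  · rintro ⟨hdet, hmax⟩
    have hA : IsUnit (psub G X).det := hdet ▸ isUnit_one
    refine ⟨rows_li_of_det hA, ?_⟩
    have hmax0 : ∀ Y : Finset V, X ⊂ Y → (psub G Y).det = 0 := fun Y h => h10 _ (hmax Y h)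
    exact le_antisymm (card_le_rank (rows_li_of_det hA)) (rank_le_of_max hG' hA hmax0)
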